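/- Let S be a completely regular semigroup, ρ a stable quasiorder on S (stable also under inversion), and let s, t ∈ S be J-equivalent elements. Then s ρ t if and only if s⁰ ρ t⁰ and s·t⁻¹ ρ (s·t⁻¹)⁰. -/
import Mathlib


/-- `JBelow s t` : s lies in the two-sided ideal generated by t. -/
def JBelow {S : Type*} [Semigroup S] (s t : S) : Prop :=
  s = t ∨ (∃ a, s = a * t) ∨ (∃ b, s = t * b) ∨ (∃ a b, s = a * t * b)

/-- `JEquiv s t` : s and t generate the same two-sided ideal. -/
def JEquiv {S : Type*} [Semigroup S] (s t : S) : Prop :=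
  JBelow s t ∧ JBelow t s

section Aux

variable {S : Type*} [Semigroup S]

theorem jb_mul_left (x : S) {b c : S} (h : JBelow b c) : JBelow (x * b) c := by
  obtain rfl | ⟨u, rfl⟩ | ⟨u, rfl⟩ | ⟨u, v, rfl⟩ := h
  · exact Or.inr (Or.inl ⟨x, rfl⟩)
  · exact Or.inr (Or.inl ⟨x * u, (mul_assoc x u c).symm⟩)
  · exact Or.inr (Or.inr (Or.inr ⟨x, u, (mul_assoc x c u).symm⟩))
  · exact Or.inr (Or.inr (Or.inr ⟨x * u, v, by simp only [mul_assoc]⟩))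

theorem jb_mul_right (y : S) {b c : S} (h : JBelow b c) : JBelow (b * y) c := by
  obtain rfl | ⟨u, rfl⟩ | ⟨u, rfl⟩ | ⟨u, v, rfl⟩ := h
  · exact Or.inr (Or.inr (Or.inl ⟨y, rfl⟩))
  · exact Or.inr (Or.inr (Or.inr ⟨u, y, rfl⟩))
  · exact Or.inr (Or.inr (Or.inl ⟨u * y, mul_assoc c u y⟩))
  · exact Or.inr (Or.inr (Or.inr ⟨u, v * y, mul_assoc (u * c) v y⟩))

theorem jb_trans {a b c : S} (h1 : JBelow a b) (h2 : JBelow b c) : JBelow a c := by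
  obtain rfl | ⟨u, rfl⟩ | ⟨u, rfl⟩ | ⟨u, v, rfl⟩ := h1
  · exact h2
  · exact jb_mul_left u h2
  · exact jb_mul_right u h2
  · exact jb_mul_right v (jb_mul_left u h2)

theorem jb_drop_right (x y : S) : JBelow (x * y) x :=
  Or.inr (Or.inr (Or.inl ⟨y, rfl⟩))

theorem key0 (inv : S → S) (h1 : ∀ x, x * inv x * x = x)
    (h3 : ∀ x, x * inv x = inv x * x) (x : S) : inv x * (x * x) = x := by
  calc inv x * (x * x) = (inv x * x) * x := (mul_assoc _ _ _).symm
    _ = (x * inv x) * x := by rw [h3]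
    _ = x := h1 x

theorem jb_sq (inv : S → S) (h1 : ∀ x, x * inv x * x = x)
    (h3 : ∀ x, x * inv x = inv x * x) (x : S) : JBelow x (x * x) :=
  Or.inr (Or.inl ⟨inv x, (key0 inv h1 h3 x).symm⟩)

theorem jb_swap (inv : S → S) (h1 : ∀ x, x * inv x * x = x)
    (h3 : ∀ x, x * inv x = inv x * x) (a b : S) : JBelow (a * b) (b * a) := by
  refine Or.inr (Or.inr (Or.inr ⟨inv (a * b) * a, b, ?_⟩))
  have h := key0 inv h1 h3 (a * b)
  simp only [mul_assoc] at h ⊢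
  exact h.symm

/-- If `t` lies in the ideal of `s` then `t` lies in the ideal of `s*t`. -/
theorem jb_to_prod (inv : S → S) (h1 : ∀ x, x * inv x * x = x)
    (h3 : ∀ x, x * inv x = inv x * x) {s t : S} (hts : JBelow t s) : JBelow t (s * t) := by
  obtain rfl | ⟨a, rfl⟩ | ⟨b, rfl⟩ | ⟨a, b, rfl⟩ := hts
  · exact jb_sq inv h1 h3 _
  · -- t = a * s
    have k1 : JBelow (a * s) (((a * s) * a) * s) := by
      have e1 : (a * s) * (a * s) = ((a * s) * a) * s := (mul_assoc (a * s) a s).symm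
      have := jb_sq inv h1 h3 (a * s)
      rwa [e1] at this
    have k3 : JBelow (((a * s) * a) * s) (s * ((a * s) * a)) := jb_swap inv h1 h3 _ _
    have k4 : JBelow (s * ((a * s) * a)) (s * (a * s)) := by
      have e2 : s * ((a * s) * a) = (s * (a * s)) * a := (mul_assoc s (a * s) a).symm
      rw [e2]; exact jb_drop_right _ _
    exact jb_trans k1 (jb_trans k3 k4)
  · -- t = s * b
    have k1 : JBelow (s * b) (((s * b) * s) * b) := by
      have e1 : (s * b) * (s * b) = ((s * b) * s) * b := (mul_assoc (s * b) s b).symm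
      have := jb_sq inv h1 h3 (s * b)
      rwa [e1] at this
    have k2 : JBelow (((s * b) * s) * b) ((s * b) * s) := jb_drop_right _ _
    have k3 : JBelow ((s * b) * s) (s * (s * b)) := jb_swap inv h1 h3 _ _
    exact jb_trans k1 (jb_trans k2 k3)
  · -- t = a * s * b
    set u : S := a * s * b with hu
    have k1 : JBelow u (((u * a) * s) * b) := by
      have e1 : u * u = ((u * a) * s) * b := by rw [hu]; simp only [mul_assoc]
      have := jb_sq inv h1 h3 u
      rwa [e1] at this
    have k2 : JBelow (((u * a) * s) * b) ((u * a) * s) := jb_drop_right _ _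
    have k3 : JBelow ((u * a) * s) (s * (u * a)) := jb_swap inv h1 h3 _ _
    have k4 : JBelow (s * (u * a)) (s * u) := by
      have e2 : s * (u * a) = (s * u) * a := (mul_assoc s u a).symm
      rw [e2]; exact jb_drop_right _ _
    exact jb_trans k1 (jb_trans k2 (jb_trans k3 k4))

theorem lemB_core0 (inv : S → S) (h1 : ∀ x, x * inv x * x = x)
    (h3 : ∀ x, x * inv x = inv x * x) {d u : S} (hd : u = d * u) : u = inv d * (d * u) := by
  have e0 : (d * inv d) * u = u := by
    calc (d * inv d) * u = (d * inv d) * (d * u) := by rw [← hd]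
      _ = ((d * inv d) * d) * u := (mul_assoc _ _ _).symm
      _ = d * u := by rw [h1]
      _ = u := hd.symm
  calc u = (d * inv d) * u := e0.symm
    _ = (inv d * d) * u := by rw [h3]
    _ = inv d * (d * u) := mul_assoc _ _ _

theorem lemB_core (inv : S → S) (h1 : ∀ x, x * inv x * x = x)
    (h3 : ∀ x, x * inv x = inv x * x) {d b u : S} (hd : u = (d * u) * b) : u = inv d * (d * u) := by
  have e0 : (d * inv d) * u = u := by
    calc (d * inv d) * u = (d * inv d) * ((d * u) * b) := by rw [← hd]
      _ = (((d * inv d) * d) * u) * b := by simp only [mul_assoc]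
      _ = (d * u) * b := by rw [h1]
      _ = u := hd.symm
  calc u = (d * inv d) * u := e0.symm
    _ = (inv d * d) * u := by rw [h3]
    _ = inv d * (d * u) := mul_assoc _ _ _

/-- Stability (L-side): if `u` lies in the ideal of `v*u`, then `u` is a left
multiple of `v*u`. -/
theorem lemB (inv : S → S) (h1 : ∀ x, x * inv x * x = x)
    (h3 : ∀ x, x * inv x = inv x * x) {u v : S} (h : JBelow u (v * u)) : ∃ c, u = c * (v * u) := by
  obtain he | ⟨a, ha⟩ | ⟨b, hb⟩ | ⟨a, b, hab⟩ := h
  · exact ⟨inv v, lemB_core0 inv h1 h3 he⟩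
  · exact ⟨a, ha⟩
  · exact ⟨inv v, lemB_core inv h1 h3 hb⟩
  · have key : a * (v * u) = (a * v) * u := (mul_assoc a v u).symm
    rw [key] at hab
    have h' := lemB_core inv h1 h3 hab
    refine ⟨inv (a * v) * a, ?_⟩
    calc u = inv (a * v) * ((a * v) * u) := h'
      _ = inv (a * v) * (a * (v * u)) := by rw [key]
      _ = (inv (a * v) * a) * (v * u) := (mul_assoc _ _ _).symm

end Aux

/-- For a stable quasiorder ρ on a completely regular semigroup and J-equivalent
elements s, t: s ρ t iff s⁰ ρ t⁰ and st⁻¹ ρ (st⁻¹)⁰, where a⁰ = a·a⁻¹. -/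
theorem trace_kernel_characterization_right
    {S : Type*} [Semigroup S] (inv : S → S)
    (hinv1 : ∀ x, x * inv x * x = x)
    (hinv2 : ∀ x, inv (inv x) = x)
    (hinv3 : ∀ x, x * inv x = inv x * x)
    (ρ : S → S → Prop)
    (hrefl : ∀ a, ρ a a)
    (htrans : ∀ a b c, ρ a b → ρ b c → ρ a c)
    (hmul_left : ∀ a b c, ρ a b → ρ (c * a) (c * b))
    (hmul_right : ∀ a b c, ρ a b → ρ (a * c) (b * c))
    (hinv_stable : ∀ a b, ρ a b → ρ (inv a) (inv b))
    (s t : S) (hJ : JEquiv s t) :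
    ρ s t ↔ (ρ (s * inv s) (t * inv t) ∧
      ρ (s * inv t) ((s * inv t) * inv (s * inv t))) := by
  -- abbreviations
  have hinv5 : ∀ x : S, inv x * x * inv x = inv x := by
    intro x; have h := hinv1 (inv x); rwa [hinv2] at h
  have hB : ∀ x : S, inv x * (x * inv x) = inv x := by
    intro x; rw [← mul_assoc]; exact hinv5 x
  have hA : ∀ x : S, x * (inv x * x) = x := by
    intro x; rw [← mul_assoc]; exact hinv1 x
  constructor
  · intro hρ
    constructor
    · exact htrans _ _ _ (hmul_right _ _ (inv s) hρ)
        (hmul_left _ _ t (hinv_stable _ _ hρ))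
    · -- forward kernel condition: z ρ z⁰ with z = s * inv t
      set z : S := s * inv t with hz
      -- z * (t * inv t) = z
      have h_zt0 : z * (t * inv t) = z := by
        calc z * (t * inv t) = s * (inv t * (t * inv t)) := by
              rw [hz, mul_assoc]
          _ = s * inv t := by rw [hB t]
      -- (z * inv z) * (t * inv t) = z * inv z
      have h_e_t0 : (z * inv z) * (t * inv t) = z * inv z := by
        calc (z * inv z) * (t * inv t) = (inv z * z) * (t * inv t) := by rw [hinv3]
          _ = inv z * (z * (t * inv t)) := mul_assoc _ _ _
          _ = inv z * z := by rw [h_zt0]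
          _ = z * inv z := (hinv3 z).symm
      have step : ρ (((z * inv z) * s) * inv t) (((z * inv z) * t) * inv t) :=
        hmul_right _ _ _ (hmul_left _ _ (z * inv z) hρ)
      rw [mul_assoc (z * inv z) s (inv t), mul_assoc (z * inv z) t (inv t)] at step
      rw [← hz] at step
      -- now step : ρ ((z * inv z) * z) ((z * inv z) * (t * inv t))
      rw [h_e_t0] at step
      have hez : (z * inv z) * z = z := hinv1 z
      rw [hez] at step
      exact step
  · rintro ⟨hi, hii⟩
    set z : S := s * inv t with hz
    -- J-machinery: inv t is a left multiple of z
    have hJt't : JBelow (inv t) t :=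
      Or.inr (Or.inr (Or.inr ⟨inv t, inv t, (hinv5 t).symm⟩))
    have hJt's : JBelow (inv t) s := jb_trans hJt't hJ.2
    have hmain : JBelow (inv t) (s * inv t) := jb_to_prod inv hinv1 hinv3 hJt's
    obtain ⟨c, hc⟩ := lemB inv hinv1 hinv3 hmain
    rw [← hz] at hc
    -- inv t * (z * inv z) = inv t
    have h_t'e : inv t * (z * inv z) = inv t := by
      calc inv t * (z * inv z) = (c * z) * (z * inv z) := by rw [← hc]
        _ = (c * z) * (inv z * z) := by rw [hinv3]
        _ = c * (z * (inv z * z)) := by rw [mul_assoc]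
        _ = c * z := by rw [hA z]
        _ = inv t := hc.symm
    -- (t * inv t) * (z * inv z) = t * inv t
    have h_t0e : (t * inv t) * (z * inv z) = t * inv t := by
      rw [mul_assoc, h_t'e]
    -- (s * inv s) * (z * inv z) = z * inv z
    have h_s0z : (s * inv s) * z = z := by
      calc (s * inv s) * z = (s * inv s) * (s * inv t) := by rw [hz]
        _ = ((s * inv s) * s) * inv t := (mul_assoc _ _ _).symm
        _ = s * inv t := by rw [hinv1]
        _ = z := hz.symm
    have h_s0e : (s * inv s) * (z * inv z) = z * inv z := by
      rw [← mul_assoc, h_s0z]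
    -- z⁰ ρ t⁰
    have hz0t0 : ρ (z * inv z) (t * inv t) := by
      have h := hmul_right _ _ (z * inv z) hi
      rwa [h_s0e, h_t0e] at h
    -- chain: s ρ s*(t*inv t) ρ (z*inv z)*t ρ t
    have c1 : ρ s (s * (t * inv t)) := by
      have h := hmul_left _ _ s hi
      have e : s * (s * inv s) = s := by
        rw [hinv3, ← mul_assoc]; exact hinv1 s
      rwa [e] at h
    have c2 : ρ (s * (t * inv t)) ((z * inv z) * t) := by
      have h := hmul_right _ _ t hii
      have e : z * t = s * (t * inv t) := by
        rw [hz, mul_assoc, ← hinv3]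
      rwa [e] at h
    have c3 : ρ ((z * inv z) * t) t := by
      have h := hmul_right _ _ t hz0t0
      rwa [hinv1 t] at h
    exact htrans _ _ _ c1 (htrans _ _ _ c2 c3)
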